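/- Let p ≥ 5, α > 0, ω > 0 and let N ≥ 2 be an integer. Let A be the set of continuously differentiable functions v : [0,∞) → ℂ such that ∫₀^∞|v|²dx, ∫₀^∞|v'|²dx and ∫₀^∞|v|^{p+1}dx are all finite, and for v ∈ A define S_ω(v) = N·((1/2)∫₀^∞|v'|²dx + (ω/2)∫₀^∞|v|²dx − (1/(p+1))∫₀^∞|v|^{p+1}dx) + (α/2)|v(0)|², I_ω(v) = N·(∫₀^∞|v'|²dx + ω∫₀^∞|v|²dx − ∫₀^∞|v|^{p+1}dx) + α|v(0)|², and P(v) = N·(∫₀^∞|v'|²dx − ((p−1)/(2(p+1)))∫₀^∞|v|^{p+1}dx) + (α/2)|v(0)|². Set d = inf { S_ω(v) : v ∈ A, v is not identically zero, I_ω(v) = 0 }. Then for every v ∈ A that is not identically zero and satisfies P(v) ≤ 0, one has d ≤ S_ω(v) − (1/2)·P(v). -/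

import Mathlib

open MeasureTheory Real Set Filter Topology

/-- Membership in the admissible class `A`: continuously differentiable on `[0,∞)` with
`|v|²`, `|v'|²` and `|v|^{p+1}` integrable on `(0,∞)`. -/
def MemA (p : ℝ) (v : ℝ → ℂ) : Prop :=
  ContDiffOn ℝ 1 v (Set.Ici 0) ∧
  MeasureTheory.IntegrableOn (fun x => ‖v x‖ ^ 2) (Set.Ioi 0) ∧
  MeasureTheory.IntegrableOn (fun x => ‖deriv v x‖ ^ 2) (Set.Ioi 0) ∧
  MeasureTheory.IntegrableOn (fun x => ‖v x‖ ^ (p + 1)) (Set.Ioi 0)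

/-- The action functional `S_ω`. -/
noncomputable def Sfun (p α ω : ℝ) (N : ℕ) (v : ℝ → ℂ) : ℝ :=
  (N : ℝ) * ((1 / 2) * (∫ x in Set.Ioi (0 : ℝ), ‖deriv v x‖ ^ 2)
      + (ω / 2) * (∫ x in Set.Ioi (0 : ℝ), ‖v x‖ ^ 2)
      - (1 / (p + 1)) * (∫ x in Set.Ioi (0 : ℝ), ‖v x‖ ^ (p + 1)))
    + (α / 2) * ‖v 0‖ ^ 2

/-- The Nehari functional `I_ω`. -/
noncomputable def Ifun (p α ω : ℝ) (N : ℕ) (v : ℝ → ℂ) : ℝ :=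
  (N : ℝ) * ((∫ x in Set.Ioi (0 : ℝ), ‖deriv v x‖ ^ 2)
      + ω * (∫ x in Set.Ioi (0 : ℝ), ‖v x‖ ^ 2)
      - (∫ x in Set.Ioi (0 : ℝ), ‖v x‖ ^ (p + 1)))
    + α * ‖v 0‖ ^ 2

/-- The virial functional `P`. -/
noncomputable def Pfun (p α : ℝ) (N : ℕ) (v : ℝ → ℂ) : ℝ :=
  (N : ℝ) * ((∫ x in Set.Ioi (0 : ℝ), ‖deriv v x‖ ^ 2)
      - (p - 1) / (2 * (p + 1)) * (∫ x in Set.Ioi (0 : ℝ), ‖v x‖ ^ (p + 1)))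
    + (α / 2) * ‖v 0‖ ^ 2

private lemma bernoulli_rpow {t q : ℝ} (ht : 0 ≤ t) (hq : 2 ≤ q) :
    1 + q / 2 * (t ^ 2 - 1) ≤ t ^ q := by
  have h1 : (1 : ℝ) ≤ q / 2 := by linarith
  have h := one_add_mul_self_le_rpow_one_add (s := t ^ 2 - 1)
    (by nlinarith [sq_nonneg t]) h1
  have h2 : (1 + (t ^ 2 - 1)) = t ^ 2 := by ring
  rw [h2] at h
  have h3 : (t ^ 2 : ℝ) ^ (q / 2) = t ^ q := by
    rw [← Real.rpow_two, ← Real.rpow_mul ht]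
    congr 1; ring
  linarith [h, h3.le, h3.ge]

private lemma key_exists (p a b c r : ℝ) (hp : 5 ≤ p) (ha : 0 ≤ a) (hb : 0 < b)
    (hc : 0 ≤ c) (hr : 0 < r)
    (hP : a + c / 2 - (p - 1) / (2 * (p + 1)) * r ≤ 0) :
    ∃ l : ℝ, 0 < l ∧ l ^ 2 * a + b + l * c - l ^ ((p - 1) / 2) * r = 0 ∧
      l ^ 2 * a / 2 + b / 2 + l * c / 2 - l ^ ((p - 1) / 2) * r / (p + 1) ≤
        (a / 2 + b / 2 + c / 2 - r / (p + 1)) -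
          1 / 2 * (a + c / 2 - (p - 1) / (2 * (p + 1)) * r) := by
  have hp1 : (0 : ℝ) < p + 1 := by linarith
  set q : ℝ := (p - 1) / 2 with hqdef
  have hq : 2 ≤ q := by rw [hqdef]; linarith
  -- translate hP
  have hPa : a + c / 2 ≤ (p - 1) / (2 * (p + 1)) * r := by linarith
  have hC : (p - 1) / (2 * (p + 1)) ≤ 1 / 2 := by
    rw [div_le_div_iff₀ (by linarith) (by norm_num)]; linarith
  have har : a - r ≤ -(r / 2) := by
    have := mul_le_mul_of_nonneg_right hC hr.le
    nlinarith
  set g : ℝ → ℝ := fun l => l ^ 2 * a + b + l * c - l ^ q * r with hgdef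
  -- small endpoint
  set l₁ : ℝ := min 1 (b / (2 * r)) with hl₁def
  have hl₁pos : 0 < l₁ := lt_min one_pos (by positivity)
  have hl₁le1 : l₁ ≤ 1 := min_le_left _ _
  have hl₁r : l₁ * r ≤ b / 2 := by
    have : l₁ ≤ b / (2 * r) := min_le_right _ _
    rw [le_div_iff₀ (by positivity)] at this
    nlinarith
  have hgl₁ : 0 < g l₁ := by
    have hpow : l₁ ^ q ≤ l₁ := by
      have := Real.rpow_le_rpow_of_exponent_ge hl₁pos hl₁le1 (by linarith : (1:ℝ) ≤ q)
      rwa [Real.rpow_one] at this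
    have : l₁ ^ q * r ≤ l₁ * r := mul_le_mul_of_nonneg_right hpow hr.le
    have h2 : 0 ≤ l₁ ^ 2 * a := by positivity
    have h3 : 0 ≤ l₁ * c := by positivity
    simp only [hgdef]
    nlinarith
  -- big endpoint
  set L : ℝ := 1 + 2 * (b + c) / r with hLdef
  have hL1 : 1 ≤ L := by
    have h : 0 ≤ 2 * (b + c) / r := by positivity
    rw [hLdef]; linarith
  have hLr : r * L = r + 2 * (b + c) := by
    rw [hLdef, mul_add, mul_one, mul_div_assoc', mul_div_cancel_left₀ _ hr.ne']
  have hgL : g L ≤ 0 := by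
    have hpow : L ^ 2 ≤ L ^ q := by
      have := Real.rpow_le_rpow_of_exponent_le hL1 hq
      rwa [Real.rpow_two] at this
    have h1 : L ^ 2 * r ≤ L ^ q * r := mul_le_mul_of_nonneg_right hpow hr.le
    -- want: L^2 a + b + L c - L^q r ≤ 0
    simp only [hgdef]
    -- L^2 (a - r) ≤ -(r/2) L^2 ; (r/2) L^2 ≥ b + L c
    nlinarith [mul_le_mul_of_nonneg_right har (sq_nonneg L),
      mul_le_mul_of_nonneg_left hLr.ge (by linarith : (0:ℝ) ≤ L),
      mul_nonneg hb.le (by linarith : (0:ℝ) ≤ L - 1),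
      mul_nonneg hc (by linarith : (0:ℝ) ≤ L - 1)]
  -- continuity and IVT
  have hl₁L : l₁ ≤ L := le_trans hl₁le1 hL1
  have hcont : ContinuousOn g (Icc l₁ L) := by
    have h1 : ContinuousOn (fun l : ℝ => l ^ q) (Icc l₁ L) := by
      apply ContinuousOn.rpow_const continuousOn_id
      intro x hx
      exact Or.inl (ne_of_gt (lt_of_lt_of_le hl₁pos hx.1))
    have h2 : ContinuousOn (fun l : ℝ => l ^ 2 * a + b + l * c) (Icc l₁ L) := by
      fun_prop
    exact h2.sub (h1.mul continuousOn_const)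
  have hivt := intermediate_value_Icc' hl₁L hcont
  have h0mem : (0 : ℝ) ∈ Icc (g L) (g l₁) := ⟨hgL, hgl₁.le⟩
  obtain ⟨l, hlmem, hgl⟩ := hivt h0mem
  have hlpos : 0 < l := lt_of_lt_of_le hl₁pos hlmem.1
  refine ⟨l, hlpos, by simpa [hgdef] using hgl, ?_⟩
  -- the S bound
  have hE := bernoulli_rpow hlpos.le hq
  set E : ℝ := l ^ q with hEdef
  -- clear denominators
  rw [← sub_nonneg]
  have h4 : (0 : ℝ) < 4 * (p + 1) := by linarith
  have key : 0 ≤ 4 * (p + 1) *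
      (((a / 2 + b / 2 + c / 2 - r / (p + 1)) -
          1 / 2 * (a + c / 2 - (p - 1) / (2 * (p + 1)) * r)) -
        (l ^ 2 * a / 2 + b / 2 + l * c / 2 - E * r / (p + 1))) := by
    have expand : 4 * (p + 1) *
        (((a / 2 + b / 2 + c / 2 - r / (p + 1)) -
            1 / 2 * (a + c / 2 - (p - 1) / (2 * (p + 1)) * r)) -
          (l ^ 2 * a / 2 + b / 2 + l * c / 2 - E * r / (p + 1))) =
        -2 * (p + 1) * l ^ 2 * a + (p + 1) * (1 - 2 * l) * c
          + 4 * E * r - 4 * r + (p - 1) * r := by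
      field_simp
      ring
    rw [expand]
    -- hE : 1 + q/2 * (l^2 - 1) ≤ E, q = (p-1)/2
    have hE' : 4 * r + (p - 1) * (l ^ 2 - 1) * r ≤ 4 * (E * r) := by
      have := mul_le_mul_of_nonneg_right hE hr.le
      rw [hqdef] at this
      linarith [this]
    have hP2 : l ^ 2 * (2 * (p + 1) * a + (p + 1) * c) ≤ l ^ 2 * ((p - 1) * r) := by
      apply mul_le_mul_of_nonneg_left _ (sq_nonneg l)
      have := mul_le_mul_of_nonneg_right hPa (by linarith : (0:ℝ) ≤ 2 * (p + 1))
      calc 2 * (p + 1) * a + (p + 1) * c = (a + c / 2) * (2 * (p + 1)) := by ring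
        _ ≤ (p - 1) / (2 * (p + 1)) * r * (2 * (p + 1)) := this
        _ = (p - 1) * r := by field_simp
    linarith [hE', hP2, mul_nonneg (mul_nonneg hp1.le hc) (sq_nonneg (l - 1)),
      sq_nonneg (l - 1)]
  exact le_of_mul_le_mul_left (by linarith [key]) h4

private lemma integral_pos_of_cont {f : ℝ → ℝ} (hf : ContinuousOn f (Set.Ici 0))
    (hnn : ∀ x, 0 ≤ f x) (hint : IntegrableOn f (Set.Ioi 0))
    {x₀ : ℝ} (hx₀ : 0 ≤ x₀) (hfx₀ : 0 < f x₀) :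
    0 < ∫ x in Set.Ioi 0, f x := by
  have hcw : ContinuousWithinAt f (Set.Ici 0) x₀ := hf x₀ hx₀
  have hev : ∀ᶠ x in 𝓝[Set.Ici 0] x₀, f x₀ / 2 < f x :=
    hcw.eventually (eventually_gt_nhds (by linarith))
  have hsub' : Set.Ioi x₀ ⊆ Set.Ici (0:ℝ) := fun x hx => le_of_lt (lt_of_le_of_lt hx₀ hx)
  have hev' : ∀ᶠ x in 𝓝[>] x₀, f x₀ / 2 < f x :=
    hev.filter_mono (nhdsWithin_mono x₀ hsub')
  obtain ⟨u, hu, hsub⟩ := mem_nhdsGT_iff_exists_Ioo_subset.mp hev'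
  have hIoo : Set.Ioo x₀ u ⊆ Set.Ioi (0:ℝ) := fun x hx => lt_of_le_of_lt hx₀ hx.1
  have hile : ∫ x in Set.Ioo x₀ u, f x ≤ ∫ x in Set.Ioi 0, f x := by
    apply setIntegral_mono_set hint (Filter.Eventually.of_forall hnn)
    exact HasSubset.Subset.eventuallyLE hIoo
  have hvol : (volume (Set.Ioo x₀ u)).toReal = u - x₀ := by
    rw [Real.volume_Ioo, ENNReal.toReal_ofReal (by linarith [mem_Ioi.mp hu])]
  have hge : f x₀ / 2 * (u - x₀) ≤ ∫ x in Set.Ioo x₀ u, f x := by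
    rw [← hvol]
    have h := setIntegral_ge_of_const_le measurableSet_Ioo
      (by rw [Real.volume_Ioo]; exact ENNReal.ofReal_ne_top)
      (fun x hx => (hsub hx).le) (hint.mono_set hIoo)
    rw [smul_eq_mul, mul_comm] at h
    exact h
  have : 0 < f x₀ / 2 * (u - x₀) := by
    have := mem_Ioi.mp hu
    have h2 : 0 < u - x₀ := by linarith
    positivity
  linarith

/-- If `v` in the admissible class is not identically zero and `P(v) ≤ 0`, then the
ground-state action level `d` satisfies `d ≤ S_ω(v) − (1/2)P(v)`. -/
theorem ground_state_level_bound (p α ω : ℝ) (hp : 5 ≤ p) (hα : 0 < α) (hω : 0 < ω)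
    (N : ℕ) (hN : 2 ≤ N)
    (d : ℝ)
    (hd : d = sInf {s : ℝ | ∃ v : ℝ → ℂ, MemA p v ∧ (∃ x ≥ (0 : ℝ), v x ≠ 0) ∧
      Ifun p α ω N v = 0 ∧ s = Sfun p α ω N v}) :
    ∀ v : ℝ → ℂ, MemA p v → (∃ x ≥ (0 : ℝ), v x ≠ 0) → Pfun p α N v ≤ 0 →
      d ≤ Sfun p α ω N v - (1 / 2) * Pfun p α N v := by
  intro v hv hnz hPle
  obtain ⟨hv1, hv2, hv3, hv4⟩ := hv
  obtain ⟨x₀, hx₀, hvx₀⟩ := hnz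
  have hp1 : (0 : ℝ) < p + 1 := by linarith
  have hN0 : (0 : ℝ) < N := by
    have : (2 : ℝ) ≤ (N : ℝ) := by exact_mod_cast hN
    linarith
  -- positivity of the basic integrals
  have hA : 0 ≤ ∫ x in Set.Ioi (0:ℝ), ‖deriv v x‖ ^ 2 :=
    setIntegral_nonneg measurableSet_Ioi (fun x _ => by positivity)
  have hB : 0 < ∫ x in Set.Ioi (0:ℝ), ‖v x‖ ^ 2 := by
    apply integral_pos_of_cont (f := fun x => ‖v x‖ ^ 2) (hv1.continuousOn.norm.pow 2) (fun x => by positivity) hv2 hx₀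
    have : 0 < ‖v x₀‖ := norm_pos_iff.mpr hvx₀
    positivity
  have hR : 0 < ∫ x in Set.Ioi (0:ℝ), ‖v x‖ ^ (p + 1) := by
    apply integral_pos_of_cont
      (hv1.continuousOn.norm.rpow_const (fun x _ => Or.inr (by linarith)))
      (fun x => Real.rpow_nonneg (norm_nonneg _) _) hv4 hx₀
    exact Real.rpow_pos_of_pos (norm_pos_iff.mpr hvx₀) _
  have hc0 : (0:ℝ) ≤ α * ‖v 0‖ ^ 2 := by positivity
  -- the P hypothesis in scalar form
  have hPeq : Pfun p α N v = (N:ℝ) * (∫ x in Set.Ioi (0:ℝ), ‖deriv v x‖ ^ 2)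
      + (α * ‖v 0‖ ^ 2) / 2
      - (p - 1) / (2 * (p + 1)) * ((N:ℝ) * (∫ x in Set.Ioi (0:ℝ), ‖v x‖ ^ (p + 1))) := by
    simp only [Pfun]; ring
  rw [hPeq] at hPle
  obtain ⟨l, hl, hroot, hSle⟩ := key_exists p
    ((N:ℝ) * (∫ x in Set.Ioi (0:ℝ), ‖deriv v x‖ ^ 2))
    ((N:ℝ) * (ω * (∫ x in Set.Ioi (0:ℝ), ‖v x‖ ^ 2)))
    (α * ‖v 0‖ ^ 2)
    ((N:ℝ) * (∫ x in Set.Ioi (0:ℝ), ‖v x‖ ^ (p + 1)))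
    hp (by positivity) (by positivity) hc0 (by positivity) hPle
  -- the rescaled competitor
  set s : ℝ := Real.sqrt l with hsdef
  have hs0 : 0 < s := Real.sqrt_pos.mpr hl
  have hs2 : s ^ 2 = l := Real.sq_sqrt hl.le
  set w : ℝ → ℂ := fun x => (s : ℂ) * v (l * x) with hwdef
  have hnw : ∀ x, ‖w x‖ = s * ‖v (l * x)‖ := by
    intro x
    rw [hwdef]
    simp only [norm_mul, Complex.norm_real, Real.norm_eq_abs, abs_of_pos hs0]
  have hnw2 : ∀ x, ‖w x‖ ^ 2 = l * ‖v (l * x)‖ ^ 2 := by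
    intro x; rw [hnw, mul_pow, hs2]
  have hsr : s ^ (p + 1) = l ^ ((p + 1) / 2) := by
    rw [hsdef, Real.sqrt_eq_rpow, ← Real.rpow_mul hl.le]
    congr 1; ring
  have hnwp : ∀ x, ‖w x‖ ^ (p + 1) = l ^ ((p + 1) / 2) * ‖v (l * x)‖ ^ (p + 1) := by
    intro x
    rw [hnw, Real.mul_rpow hs0.le (norm_nonneg _), hsr]
  -- derivative of w on the positive axis
  have hderiv : ∀ x ∈ Set.Ioi (0:ℝ), deriv w x = ((s * l : ℝ) : ℂ) * deriv v (l * x) := by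
    intro x hx
    have hlx : 0 < l * x := mul_pos hl hx
    have hdv : DifferentiableAt ℝ v (l * x) :=
      (hv1.contDiffAt (Ici_mem_nhds hlx)).differentiableAt one_ne_zero
    have h1 : HasDerivAt (fun y : ℝ => l * y) l x := by
      simpa using (hasDerivAt_id x).const_mul l
    have h3 : HasDerivAt (fun y => v (l * y)) (l • deriv v (l * x)) x :=
      HasDerivAt.scomp x hdv.hasDerivAt h1
    have h4 : HasDerivAt w ((s : ℂ) * (l • deriv v (l * x))) x := h3.const_mul _
    rw [h4.deriv, Complex.real_smul]
    push_cast
    ring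
  have hnd2 : ∀ x ∈ Set.Ioi (0:ℝ), ‖deriv w x‖ ^ 2 = l ^ 3 * ‖deriv v (l * x)‖ ^ 2 := by
    intro x hx
    rw [hderiv x hx, norm_mul, Complex.norm_real, Real.norm_eq_abs,
      abs_of_pos (mul_pos hs0 hl)]
    have h5 : (s * l * ‖deriv v (l * x)‖) ^ 2 = s ^ 2 * (l ^ 2 * ‖deriv v (l * x)‖ ^ 2) := by
      ring
    rw [h5, hs2]
    ring
  -- integrability of the rescaled pieces
  have Jv2 : IntegrableOn (fun x => ‖v (l * x)‖ ^ 2) (Set.Ioi 0) :=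
    (integrableOn_Ioi_comp_mul_left_iff (fun x => ‖v x‖ ^ 2) 0 hl).mpr
      (by rw [mul_zero]; exact hv2)
  have Jvp : IntegrableOn (fun x => ‖v (l * x)‖ ^ (p + 1)) (Set.Ioi 0) :=
    (integrableOn_Ioi_comp_mul_left_iff (fun x => ‖v x‖ ^ (p + 1)) 0 hl).mpr
      (by rw [mul_zero]; exact hv4)
  have Jvd : IntegrableOn (fun x => ‖deriv v (l * x)‖ ^ 2) (Set.Ioi 0) :=
    (integrableOn_Ioi_comp_mul_left_iff (fun x => ‖deriv v x‖ ^ 2) 0 hl).mpr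
      (by rw [mul_zero]; exact hv3)
  have hw2int : IntegrableOn (fun x => ‖w x‖ ^ 2) (Set.Ioi 0) := by
    have h : (fun x => ‖w x‖ ^ 2) = fun x => l * ‖v (l * x)‖ ^ 2 := funext hnw2
    rw [h]; exact Jv2.const_mul l
  have hwpint : IntegrableOn (fun x => ‖w x‖ ^ (p + 1)) (Set.Ioi 0) := by
    have h : (fun x => ‖w x‖ ^ (p + 1)) = fun x => l ^ ((p+1)/2) * ‖v (l * x)‖ ^ (p + 1) :=
      funext hnwp
    rw [h]; exact Jvp.const_mul _
  have hwdint : IntegrableOn (fun x => ‖deriv w x‖ ^ 2) (Set.Ioi 0) :=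
    MeasureTheory.IntegrableOn.congr_fun (Jvd.const_mul (l ^ 3))
      (fun x hx => (hnd2 x hx).symm) measurableSet_Ioi
  -- smoothness of w
  have hmaps : Set.MapsTo (fun x : ℝ => l * x) (Set.Ici 0) (Set.Ici 0) :=
    fun x hx => mul_nonneg hl.le hx
  have hw_cd : ContDiffOn ℝ 1 w (Set.Ici 0) := by
    have h : ContDiffOn ℝ 1 (fun x : ℝ => v (l * x)) (Set.Ici 0) :=
      hv1.comp ((contDiff_const.mul contDiff_id).contDiffOn) hmaps
    exact contDiffOn_const.mul h
  have hwA : MemA p w := ⟨hw_cd, hw2int, hwdint, hwpint⟩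
  -- w is nonzero at x₀ / l
  have hwnz : ∃ x ≥ (0:ℝ), w x ≠ 0 := by
    refine ⟨x₀ / l, div_nonneg hx₀ hl.le, ?_⟩
    have hxl : l * (x₀ / l) = x₀ := by field_simp
    rw [hwdef]
    simp only [hxl]
    exact mul_ne_zero (by exact_mod_cast Complex.ofReal_ne_zero.mpr hs0.ne') hvx₀
  -- integral identities for w
  have IB : (∫ x in Set.Ioi (0:ℝ), ‖w x‖ ^ 2) = ∫ x in Set.Ioi (0:ℝ), ‖v x‖ ^ 2 := by
    have h1 : (∫ x in Set.Ioi (0:ℝ), ‖w x‖ ^ 2) = ∫ x in Set.Ioi (0:ℝ), l * ‖v (l*x)‖ ^ 2 := by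
      simp only [hnw2]
    have h2 := integral_comp_mul_left_Ioi (fun x => ‖v x‖ ^ 2) 0 hl
    simp only [mul_zero, smul_eq_mul] at h2
    rw [h1, integral_const_mul, h2]
    field_simp
  have IR : (∫ x in Set.Ioi (0:ℝ), ‖w x‖ ^ (p+1))
      = l ^ ((p-1)/2) * ∫ x in Set.Ioi (0:ℝ), ‖v x‖ ^ (p+1) := by
    have h1 : (∫ x in Set.Ioi (0:ℝ), ‖w x‖ ^ (p+1))
        = ∫ x in Set.Ioi (0:ℝ), l ^ ((p+1)/2) * ‖v (l*x)‖ ^ (p+1) := by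
      simp only [hnwp]
    have h2 := integral_comp_mul_left_Ioi (fun x => ‖v x‖ ^ (p+1)) 0 hl
    simp only [mul_zero, smul_eq_mul] at h2
    rw [h1, integral_const_mul, h2, ← mul_assoc]
    congr 1
    rw [← Real.rpow_neg_one l, ← Real.rpow_add hl]
    congr 1
    ring
  have IA : (∫ x in Set.Ioi (0:ℝ), ‖deriv w x‖ ^ 2)
      = l ^ 2 * ∫ x in Set.Ioi (0:ℝ), ‖deriv v x‖ ^ 2 := by
    have h1 : (∫ x in Set.Ioi (0:ℝ), ‖deriv w x‖ ^ 2)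
        = ∫ x in Set.Ioi (0:ℝ), l ^ 3 * ‖deriv v (l*x)‖ ^ 2 :=
      setIntegral_congr_fun measurableSet_Ioi (fun x hx => hnd2 x hx)
    have h2 := integral_comp_mul_left_Ioi (fun x => ‖deriv v x‖ ^ 2) 0 hl
    simp only [mul_zero, smul_eq_mul] at h2
    rw [h1, integral_const_mul, h2, ← mul_assoc]
    congr 1
    field_simp
  have Iw0 : ‖w 0‖ ^ 2 = l * ‖v 0‖ ^ 2 := by
    have := hnw2 0
    rwa [mul_zero] at this
  -- Ifun of w vanishes
  have hIw : Ifun p α ω N w = 0 := by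
    simp only [Ifun]
    rw [IA, IB, IR, Iw0]
    linear_combination hroot
  -- lower boundedness of the constraint set
  have hbdd : BddBelow {s : ℝ | ∃ u : ℝ → ℂ, MemA p u ∧ (∃ x ≥ (0 : ℝ), u x ≠ 0) ∧
      Ifun p α ω N u = 0 ∧ s = Sfun p α ω N u} := by
    refine ⟨0, fun t ht => ?_⟩
    obtain ⟨u, -, -, hIu, rfl⟩ := ht
    have hRu : 0 ≤ ∫ x in Set.Ioi (0:ℝ), ‖u x‖ ^ (p+1) :=
      setIntegral_nonneg measurableSet_Ioi (fun x _ => Real.rpow_nonneg (norm_nonneg _) _)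
    have heq : Sfun p α ω N u
        = (1/2 - 1/(p+1)) * ((N:ℝ) * ∫ x in Set.Ioi (0:ℝ), ‖u x‖ ^ (p+1)) := by
      simp only [Sfun, Ifun] at hIu ⊢
      linear_combination (1/2) * hIu
    rw [heq]
    have hhalf : (0:ℝ) ≤ 1/2 - 1/(p+1) := by
      have : 1/(p+1) ≤ 1/2 := by
        rw [div_le_div_iff₀ hp1 (by norm_num)]; linarith
      linarith
    exact mul_nonneg hhalf (mul_nonneg (Nat.cast_nonneg N) hRu)
  -- membership
  have hmem : Sfun p α ω N w ∈ {s : ℝ | ∃ u : ℝ → ℂ, MemA p u ∧ (∃ x ≥ (0 : ℝ), u x ≠ 0) ∧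
      Ifun p α ω N u = 0 ∧ s = Sfun p α ω N u} := ⟨w, hwA, hwnz, hIw, rfl⟩
  rw [hd]
  refine le_trans (csInf_le hbdd hmem) ?_
  -- the final bound
  have hSw : Sfun p α ω N w
      = l ^ 2 * ((N:ℝ) * (∫ x in Set.Ioi (0:ℝ), ‖deriv v x‖ ^ 2)) / 2
        + ((N:ℝ) * (ω * (∫ x in Set.Ioi (0:ℝ), ‖v x‖ ^ 2))) / 2
        + l * (α * ‖v 0‖ ^ 2) / 2
        - l ^ ((p-1)/2) * ((N:ℝ) * (∫ x in Set.Ioi (0:ℝ), ‖v x‖ ^ (p+1))) / (p+1) := by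
    simp only [Sfun]
    rw [IA, IB, IR, Iw0]
    ring
  have hRHS : Sfun p α ω N v - (1/2) * Pfun p α N v
      = (((N:ℝ) * (∫ x in Set.Ioi (0:ℝ), ‖deriv v x‖ ^ 2)) / 2
          + ((N:ℝ) * (ω * (∫ x in Set.Ioi (0:ℝ), ‖v x‖ ^ 2))) / 2
          + (α * ‖v 0‖ ^ 2) / 2
          - ((N:ℝ) * (∫ x in Set.Ioi (0:ℝ), ‖v x‖ ^ (p+1))) / (p+1))
        - 1/2 * (((N:ℝ) * (∫ x in Set.Ioi (0:ℝ), ‖deriv v x‖ ^ 2))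
          + (α * ‖v 0‖ ^ 2) / 2
          - (p-1)/(2*(p+1)) * ((N:ℝ) * (∫ x in Set.Ioi (0:ℝ), ‖v x‖ ^ (p+1)))) := by
    simp only [Sfun, Pfun]
    ring
  rw [hSw, hRHS]
  linarith [hSle]
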